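/- Let φ : A → B be a ring homomorphism making B a finitely generated A-module, and let V be a multiplicative subset of A with 0 ∉ φ(V). If a B-module M is V-finitely presented as an A-module, then M is φ(V)-finitely presented as a B-module. -/

import Mathlib

def IsSFinite {R : Type*} [CommRing R] (S : Submonoid R) (M : Type*) [AddCommGroup M]
    [Module R M] : Prop :=
  ∃ s ∈ S, ∃ N : Submodule R M, N.FG ∧ ∀ m : M, s • m ∈ N

def IsSFinitelyPresented {R : Type*} [CommRing R] (S : Submonoid R) (M : Type*)
    [AddCommGroup M] [Module R M] : Prop :=
  ∃ (n : ℕ) (f : (Fin n → R) →ₗ[R] M), Function.Surjective f ∧ IsSFinite S (LinearMap.ker f)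

theorem sfp_change_of_rings {A B : Type*} [CommRing A] [CommRing B] [Algebra A B]
    [Module.Finite A B] (V : Submonoid A)
    (h0 : (0 : B) ∉ V.map (algebraMap A B).toMonoidHom)
    (M : Type*) [AddCommGroup M] [Module A M] [Module B M] [IsScalarTower A B M]
    (hM : IsSFinitelyPresented V M) :
    IsSFinitelyPresented (V.map (algebraMap A B).toMonoidHom) M := by
  classical
  obtain ⟨n, f, hf, s, hsV, N0, hN0fg, hN0⟩ := hM
  obtain ⟨k, q, hq⟩ := Module.Finite.exists_fin' A B
  -- the B-linear surjection g : Bⁿ → M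
  set v : Fin n → M := fun i => f (Pi.single i 1) with hv
  set g : (Fin n → B) →ₗ[B] M := Fintype.linearCombination B v with hgdef
  have hgf : ∀ a : Fin n → A, g (fun i => algebraMap A B (a i)) = f a := by
    intro a
    have h1 : g (fun i => algebraMap A B (a i)) = ∑ i, a i • v i := by
      rw [hgdef, Fintype.linearCombination_apply]
      exact Finset.sum_congr rfl fun i _ => by rw [algebraMap_smul]
    have h2 : f a = ∑ i, a i • v i := by
      conv_lhs => rw [← Finset.univ_sum_single a]
      rw [map_sum]
      refine Finset.sum_congr rfl fun i _ => ?_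
      have : Pi.single i (a i) = a i • (Pi.single i 1 : Fin n → A) := by
        ext j
        by_cases hij : j = i
        · subst hij; simp
        · simp [Pi.single_eq_of_ne hij]
      rw [this, map_smul]
    rw [h1, h2]
  have hg : Function.Surjective g := by
    intro m
    obtain ⟨a, rfl⟩ := hf m
    exact ⟨fun i => algebraMap A B (a i), hgf a⟩
  -- the A-linear surjection Q : A^(n×k) → Bⁿ
  set Q : (Fin n → (Fin k → A)) →ₗ[A] (Fin n → B) :=
    LinearMap.pi (fun i => q ∘ₗ LinearMap.proj i) with hQdef
  have hQapp : ∀ c i, Q c i = q (c i) := fun c i => rfl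
  have hQ : Function.Surjective Q := by
    intro b
    choose c hc using fun i => hq (b i)
    exact ⟨fun i => c i, funext fun i => hc i⟩
  set h : (Fin n → (Fin k → A)) →ₗ[A] M := (g.restrictScalars A).comp Q with hhdef
  have hh : Function.Surjective h := by
    intro m
    obtain ⟨b, hb⟩ := hg m
    obtain ⟨c, rfl⟩ := hQ b
    exact ⟨c, hb⟩
  -- lift maps
  obtain ⟨w, hw⟩ := Module.projective_lifting_property f h hf
  obtain ⟨t, ht⟩ := Module.projective_lifting_property h f hh
  have hwk : ∀ p, f (w p) = h p := fun p => congrArg (· p) (congrArg DFunLike.coe hw)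
  have htk : ∀ y, h (t y) = f y := fun y => congrArg (· y) (congrArg DFunLike.coe ht)
  -- the submodule N of ker f in the ambient module
  set N : Submodule A (Fin n → A) := N0.map (LinearMap.ker f).subtype with hNdef
  have hNfg : N.FG := hN0fg.map _
  have hNle : N ≤ LinearMap.ker f := Submodule.map_subtype_le _ _
  have hN : ∀ y ∈ LinearMap.ker f, s • y ∈ N := fun y hy => ⟨s • ⟨y, hy⟩, hN0 _, rfl⟩
  -- the bounding submodule for ker h
  set N'' : Submodule A (Fin n → (Fin k → A)) :=
    LinearMap.range (LinearMap.id - t ∘ₗ w) ⊔ N.map t with hN''def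
  have hN''fg : N''.FG := by
    refine Submodule.FG.sup ?_ (hNfg.map t)
    rw [← Submodule.map_top]
    exact (Module.Finite.fg_top (R := A)).map _
  have hN''le : N'' ≤ LinearMap.ker h := by
    refine sup_le ?_ ?_
    · rintro x ⟨p, rfl⟩
      simp only [LinearMap.mem_ker, LinearMap.sub_apply, LinearMap.id_apply,
        LinearMap.comp_apply, map_sub]
      rw [htk, hwk, sub_self]
    · rintro x ⟨y, hy, rfl⟩
      simp only [LinearMap.mem_ker]
      rw [htk]
      exact hNle hy
  have hN'' : ∀ p ∈ LinearMap.ker h, s • p ∈ N'' := by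
    intro p hp
    have hwp : w p ∈ LinearMap.ker f := by
      rw [LinearMap.mem_ker, hwk]; exact hp
    have e : s • p = (s • p - t (w (s • p))) + t (s • w p) := by
      rw [map_smul]; abel
    rw [e]
    refine Submodule.add_mem_sup ⟨s • p, rfl⟩ ⟨s • w p, hN _ hwp, rfl⟩
  -- the bounding B-submodule of ker g
  set NB : Submodule B (Fin n → B) := Submodule.span B ((N''.map Q : Submodule A (Fin n → B)) : Set (Fin n → B)) with hNBdef
  have hNBfg : NB.FG := by
    obtain ⟨T, hT⟩ := hN''fg.map Q
    refine ⟨T, ?_⟩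
    rw [hNBdef, ← hT, Submodule.span_span_of_tower]
  have hNBle : NB ≤ LinearMap.ker (g : (Fin n → B) →ₗ[B] M) := by
    rw [hNBdef, Submodule.span_le]
    rintro b ⟨p, hp, rfl⟩
    have := hN''le hp
    exact this
  refine ⟨n, g, hg, algebraMap A B s, Submonoid.mem_map_of_mem _ hsV,
    NB.comap (LinearMap.ker g).subtype, ?_, ?_⟩
  · apply Submodule.fg_of_fg_map_injective (LinearMap.ker g).subtype Subtype.val_injective
    rwa [Submodule.map_comap_subtype, inf_of_le_right hNBle]
  · rintro ⟨b, hb⟩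
    simp only [Submodule.mem_comap, Submodule.coe_subtype, SetLike.mk_smul_mk]
    have hsb : algebraMap A B s • b = s • b := algebraMap_smul B s b
    obtain ⟨p, rfl⟩ := hQ b
    have hp : p ∈ LinearMap.ker h := hb
    rw [hsb, ← map_smul]
    exact Submodule.subset_span ⟨s • p, hN'' p hp, rfl⟩
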